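/- An infinite sequence ⟨ā_i : i ∈ I⟩ of n-tuples is both indiscernible over M and an M-f.s. sequence if and only if there is an ultrafilter U on M^n such that tp(ā_i / M A_{<i}) = Av(U, M A_{<i}) for every i ∈ I. -/

import Mathlib

open FirstOrder FirstOrder.Language Cardinal Set

universe u v w

namespace MonadicNIP

variable {L : FirstOrder.Language.{u, u}} {C : Type u} [L.Structure C]

/-- The complete type of the tuple `a` over the parameter set `B`:
all formulas with parameters from `B` and variables `α` satisfied by `a`. -/
def tpSet {α : Type v} (B : Set C) (a : α → C) : Set (L.Formula (B ⊕ α)) :=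
  {φ | φ.Realize (Sum.elim (Subtype.val : B → C) a)}

/-- A set of formulas over `B` (a "type") is finitely satisfied in `M` if each of
its formulas is realized by a tuple from `M`. -/
def FinSat (M : Set C) {α : Type v} {B : Set C} (p : Set (L.Formula (B ⊕ α))) : Prop :=
  ∀ φ ∈ p, ∃ m : α → C, (∀ i, m i ∈ M) ∧
    Formula.Realize φ (Sum.elim (Subtype.val : B → C) m)

/-- `p` is a complete type over `B` (in the monster `C`): finitely satisfiable
in `C` and deciding every formula. -/
def IsCompleteType {α : Type v} (B : Set C) (p : Set (L.Formula (B ⊕ α))) : Prop :=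
  (∀ s : Finset (L.Formula (B ⊕ α)), ↑s ⊆ p →
      ∃ a : α → C, ∀ φ ∈ s, Formula.Realize φ (Sum.elim (Subtype.val : B → C) a)) ∧
    ∀ φ : L.Formula (B ⊕ α), φ ∈ p ∨ φ.not ∈ p

/-- `tp(A/B)` is finitely satisfied in `M` (formulated without an enumeration of `A`). -/
def SetFinSat (L : FirstOrder.Language.{u, u}) {C : Type u} [L.Structure C] (M B A : Set C) : Prop :=
  ∀ (n : ℕ) (φ : L.Formula (B ⊕ Fin n)) (a : Fin n → C), (∀ i, a i ∈ A) →
    φ.Realize (Sum.elim (Subtype.val : B → C) a) →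
    ∃ m : Fin n → C, (∀ i, m i ∈ M) ∧ φ.Realize (Sum.elim (Subtype.val : B → C) m)

/-- `⟨A i : i ∈ I⟩` is an `M`-f.s. sequence over `B`. -/
def IsFSSeq (L : FirstOrder.Language.{u, u}) {C : Type u} [L.Structure C] (M B : Set C) {I : Type v} [LinearOrder I] (A : I → Set C) : Prop :=
  ∀ i : I, SetFinSat L M (B ∪ ⋃ j < i, A j) (A i)

/-- The average type of an ultrafilter `U` on `M^n` over the parameter set `B`. -/
def Av {n : ℕ} {M : Set C} (U : Ultrafilter (Fin n → M)) (B : Set C) :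
    Set (L.Formula (B ⊕ Fin n)) :=
  {φ | {m : Fin n → M |
      Formula.Realize φ (Sum.elim (Subtype.val : B → C) (fun i => (m i : C)))} ∈ U}

/-- `C0` is full (for non-splitting over `M`): every complete type over `M`
in finitely many variables (realized in the monster) is realized in `C0`. -/
def IsFull (L : FirstOrder.Language.{u, u}) {C : Type u} [L.Structure C] (M C0 : Set C) : Prop :=
  ∀ (n : ℕ) (a : Fin n → C), ∃ c : Fin n → C, (∀ i, c i ∈ C0) ∧
    tpSet (L := L) M a = tpSet (L := L) M c

/-- The sequence of tuples `a` is indiscernible over `B`. -/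
def IndiscernibleOver (L : FirstOrder.Language.{u, u}) {C : Type u} [L.Structure C] {I : Type v} [LinearOrder I] {α : Type w} (B : Set C)
    (a : I → α → C) : Prop :=
  ∀ (n : ℕ) (i j : Fin n → I), StrictMono i → StrictMono j →
    tpSet (L := L) B (fun p : Fin n × α => a (i p.1) p.2) =
      tpSet (L := L) B (fun p : Fin n × α => a (j p.1) p.2)

/-- The type `p` over `B` does not split over `M0`: parameter tuples from `B`
with the same type over `M0` are interchangeable in `p`. -/
def NotSplitOver (M0 : Set C) {B : Set C} {α : Type v}
    (p : Set (L.Formula (B ⊕ α))) : Prop :=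
  ∀ (k : ℕ) (b b' : Fin k → B) (φ : L.Formula (Fin k ⊕ α)),
    tpSet (L := L) M0 (fun i => (b i : C)) = tpSet (L := L) M0 (fun i => (b' i : C)) →
    (φ.relabel (Sum.elim (fun i => Sum.inl (b i)) Sum.inr) ∈ p ↔
      φ.relabel (Sum.elim (fun i => Sum.inl (b' i)) Sum.inr) ∈ p)


/-- Realization of a formula only depends on the free variables. -/
lemma realize_congr_freeVar {α : Type*} [DecidableEq α] (φ : L.Formula α) {v v' : α → C}
    (h : ∀ u ∈ φ.freeVarFinset, v u = v' u) : φ.Realize v ↔ φ.Realize v' := by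
  have h1 := BoundedFormula.realize_restrictFreeVar' (M := C) (φ := φ)
    (s := (↑φ.freeVarFinset : Set α)) Set.Subset.rfl (v := v) (xs := default)
  have h2 := BoundedFormula.realize_restrictFreeVar' (M := C) (φ := φ)
    (s := (↑φ.freeVarFinset : Set α)) Set.Subset.rfl (v := v') (xs := default)
  have hvv : v ∘ ((↑) : (↑φ.freeVarFinset : Set α) → α)
      = v' ∘ ((↑) : (↑φ.freeVarFinset : Set α) → α) :=
    funext fun u => h u (by exact_mod_cast u.2)
  rw [Formula.Realize, ← h1, Formula.Realize, ← h2, hvv]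

lemma strictMono_snoc {I : Type v} [LinearOrder I] {k : ℕ} (f : Fin k → I) (x : I)
    (hf : StrictMono f) (hx : ∀ t, f t < x) : StrictMono (Fin.snoc f x) := by
  intro p q hpq
  rcases Fin.eq_castSucc_or_eq_last q with ⟨q₀, rfl⟩ | rfl
  · rcases Fin.eq_castSucc_or_eq_last p with ⟨p₀, rfl⟩ | rfl
    · simp only [Fin.snoc_castSucc]
      exact hf (by simpa using hpq)
    · exact absurd hpq (by simp [Fin.lt_iff_val_lt_val])
  · rcases Fin.eq_castSucc_or_eq_last p with ⟨p₀, rfl⟩ | rfl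
    · simp only [Fin.snoc_castSucc, Fin.snoc_last]
      exact hx p₀
    · exact absurd hpq (lt_irrefl _)

/-- Substitute elements of `β` for the last block of variables. -/
def subLast {β : Type*} {k n : ℕ} (φ : L.Formula (β ⊕ (Fin (k + 1) × Fin n)))
    (m : Fin n → β) : L.Formula (β ⊕ (Fin k × Fin n)) :=
  φ.relabel (Sum.elim Sum.inl
    (fun pq => Fin.lastCases (Sum.inl (m pq.2)) (fun p₀ => Sum.inr (p₀, pq.2)) pq.1))

section Claim

variable {M : L.ElementarySubstructure C} {I : Type v} [LinearOrder I]
  {n : ℕ} {a : I → Fin n → C}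

lemma key_claim {U : Ultrafilter (Fin n → ((M : Set C) : Set C))}
    (hU : ∀ i : I, tpSet (L := L) ((M : Set C) ∪ ⋃ j < i, Set.range (a j)) (a i) =
          Av (L := L) U ((M : Set C) ∪ ⋃ j < i, Set.range (a j)))
    {k : ℕ} (i : Fin (k + 1) → I) (hi : StrictMono i)
    (φ : L.Formula (((M : Set C) : Set C) ⊕ (Fin (k + 1) × Fin n))) :
    φ.Realize (Sum.elim (Subtype.val : ((M : Set C) : Set C) → C) (fun p => a (i p.1) p.2)) ↔
      {m : Fin n → ((M : Set C) : Set C) |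
        (subLast (L := L) φ m).Realize (Sum.elim (Subtype.val : ((M : Set C) : Set C) → C)
          (fun p : Fin k × Fin n => a (i p.1.castSucc) p.2))} ∈ U := by
  set i0 := i (Fin.last k) with hi0
  set B : Set C := (M : Set C) ∪ ⋃ j < i0, Set.range (a j) with hB
  have hmemB : ∀ (p₀ : Fin k) (q : Fin n), a (i p₀.castSucc) q ∈ B := by
    intro p₀ q
    refine Or.inr ?_
    simp only [Set.mem_iUnion]
    exact ⟨i p₀.castSucc, hi (Fin.castSucc_lt_last p₀), ⟨q, rfl⟩⟩
  set r : ((M : Set C) : Set C) ⊕ (Fin (k + 1) × Fin n) → (B : Set C) ⊕ Fin n :=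
    Sum.elim (fun x => Sum.inl ⟨x.1, Or.inl x.2⟩)
      (fun pq => Fin.lastCases (Sum.inr pq.2)
        (fun p₀ => Sum.inl ⟨a (i p₀.castSucc) pq.2, hmemB p₀ pq.2⟩) pq.1) with hr
  set ψ : L.Formula ((B : Set C) ⊕ Fin n) := φ.relabel r with hψ
  have h1 : ψ ∈ tpSet (L := L) B (a i0) ↔
      φ.Realize (Sum.elim (Subtype.val : ((M : Set C) : Set C) → C) (fun p => a (i p.1) p.2)) := by
    show ψ.Realize _ ↔ _
    rw [hψ, Formula.realize_relabel]
    apply iff_of_eq; congr 1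
    funext u
    rcases u with x | ⟨p, q⟩
    · rfl
    · induction p using Fin.lastCases with
      | last => simp [hr, hi0]
      | cast p₀ => simp [hr]
  have h2 : ∀ m : Fin n → ((M : Set C) : Set C),
      (ψ.Realize (Sum.elim (Subtype.val : B → C) (fun q => (m q : C))) ↔
        (subLast (L := L) φ m).Realize (Sum.elim (Subtype.val : ((M : Set C) : Set C) → C)
          (fun p : Fin k × Fin n => a (i p.1.castSucc) p.2))) := by
    intro m
    rw [hψ, Formula.realize_relabel, subLast, Formula.realize_relabel]
    apply iff_of_eq; congr 1
    funext u
    rcases u with x | ⟨p, q⟩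
    · rfl
    · induction p using Fin.lastCases with
      | last => simp [hr]
      | cast p₀ => simp [hr]
  rw [← h1, hU i0]
  show _ ∈ U ↔ _ ∈ U
  apply iff_of_eq; congr 1
  ext m
  exact h2 m

lemma equal_types {U : Ultrafilter (Fin n → ((M : Set C) : Set C))}
    (hU : ∀ i : I, tpSet (L := L) ((M : Set C) ∪ ⋃ j < i, Set.range (a j)) (a i) =
          Av (L := L) U ((M : Set C) ∪ ⋃ j < i, Set.range (a j)))
    (k : ℕ) : ∀ (i j : Fin k → I), StrictMono i → StrictMono j →
    ∀ φ : L.Formula (((M : Set C) : Set C) ⊕ (Fin k × Fin n)),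
      (φ.Realize (Sum.elim (Subtype.val : ((M : Set C) : Set C) → C) (fun p => a (i p.1) p.2)) ↔
       φ.Realize (Sum.elim (Subtype.val : ((M : Set C) : Set C) → C) (fun p => a (j p.1) p.2))) := by
  induction k with
  | zero =>
    intro i j _ _ φ
    apply iff_of_eq; congr 1
    funext u
    rcases u with x | ⟨p, q⟩
    · rfl
    · exact p.elim0
  | succ k ih =>
    intro i j hi hj φ
    rw [key_claim hU i hi φ, key_claim hU j hj φ]
    apply iff_of_eq; congr 1
    ext m
    exact ih (fun t => i t.castSucc) (fun t => j t.castSucc)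
      (hi.comp Fin.strictMono_castSucc) (hj.comp Fin.strictMono_castSucc) (subLast (L := L) φ m)

end Claim

section Transfer

variable {M : L.ElementarySubstructure C} {I : Type v} [LinearOrder I]
  {n : ℕ} {a : I → Fin n → C}

lemma transfer_aux (hind : IndiscernibleOver L (M : Set C) a) {i i' : I} (hii : i ≤ i')
    (B : Set C)
    (hP : ∀ b : B, (b : C) ∈ (M : Set C) ∨ ∃ p : I × Fin n, p.1 < i ∧ a p.1 p.2 = (b : C))
    (φ : L.Formula (↥B ⊕ Fin n))
    (hφ : φ.Realize (Sum.elim (Subtype.val : ↥B → C) (a i))) :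
    φ.Realize (Sum.elim (Subtype.val : ↥B → C) (a i')) := by
  rcases eq_or_lt_of_le hii with rfl | hlt
  · exact hφ
  classical
  set P : B → Prop := fun b => ∃ p : I × Fin n, p.1 < i ∧ a p.1 p.2 = (b : C) with hPdef
  set J : Finset I := φ.freeVarFinset.biUnion
    (fun u => Sum.elim (fun b => if h : P b then {h.choose.1} else ∅) (fun _ => ∅) u) with hJdef
  have hJlt : ∀ j ∈ J, j < i := by
    intro j hj
    rw [hJdef, Finset.mem_biUnion] at hj
    obtain ⟨u, _, hju⟩ := hj
    rcases u with b | q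
    · simp only [Sum.elim_inl] at hju
      split_ifs at hju with h
      · simp only [Finset.mem_singleton] at hju
        subst hju
        exact h.choose_spec.1
      · simp at hju
    · simp at hju
  set k : ℕ := J.card with hkdef
  set e : Fin k ≃o ↥J := J.orderIsoOfFin rfl with hedef
  set G : (↥B ⊕ Fin n) → (↥(M : Set C) ⊕ (Fin (k + 1) × Fin n)) :=
    Sum.elim
      (fun b => if h : P b then
          Sum.inr (⟨if hJ : h.choose.1 ∈ J then (e.symm ⟨h.choose.1, hJ⟩).castSucc
            else Fin.last k, h.choose.2⟩)
        else Sum.inl ⟨(b : C), (hP b).resolve_right h⟩)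
      (fun q => Sum.inr (Fin.last k, q)) with hGdef
  set ψ : L.Formula (↥(M : Set C) ⊕ (Fin (k + 1) × Fin n)) := φ.relabel G with hψdef
  set w : Fin (k + 1) → I := Fin.snoc (fun t => ((e t : ↥J) : I)) i with hwdef
  set w' : Fin (k + 1) → I := Fin.snoc (fun t => ((e t : ↥J) : I)) i' with hw'def
  have hemono : StrictMono (fun t : Fin k => ((e t : ↥J) : I)) := by
    intro s t hst
    exact Subtype.coe_lt_coe.mpr (e.strictMono hst)
  have helt : ∀ t : Fin k, ((e t : ↥J) : I) < i := fun t => hJlt _ (e t).2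
  have hw : StrictMono w := strictMono_snoc _ _ hemono helt
  have hw' : StrictMono w' := strictMono_snoc _ _ hemono (fun t => lt_trans (helt t) hlt)
  -- agreement of valuations on free variables
  have hagree : ∀ (x : I),
      ∀ u ∈ φ.freeVarFinset,
        (Sum.elim (Subtype.val : ↥(M : Set C) → C)
            (fun p : Fin (k + 1) × Fin n =>
              a ((Fin.snoc (fun t => ((e t : ↥J) : I)) x : Fin (k + 1) → I) p.1) p.2)
          ∘ G) u
        = Sum.elim (Subtype.val : ↥B → C) (a x) u := by
    intro x u hu
    rcases u with b | q
    · simp only [Function.comp_apply, hGdef, Sum.elim_inl]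
      by_cases h : P b
      · rw [dif_pos h]
        have hJmem : h.choose.1 ∈ J := by
          rw [hJdef]
          exact Finset.mem_biUnion.mpr ⟨Sum.inl b, hu, by simp [h]⟩
        rw [dif_pos hJmem]
        simp only [Sum.elim_inr, Fin.snoc_castSucc, OrderIso.apply_symm_apply]
        exact h.choose_spec.2
      · rw [dif_neg h]
        rfl
    · simp only [Function.comp_apply, hGdef, Sum.elim_inr, Fin.snoc_last, Sum.elim_inr]
  have hstep : ∀ (x : I),
      (ψ.Realize (Sum.elim (Subtype.val : ↥(M : Set C) → C)
          (fun p : Fin (k + 1) × Fin n =>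
            a ((Fin.snoc (fun t => ((e t : ↥J) : I)) x : Fin (k + 1) → I) p.1) p.2))
        ↔ φ.Realize (Sum.elim (Subtype.val : ↥B → C) (a x))) := by
    intro x
    rw [hψdef, Formula.realize_relabel]
    exact realize_congr_freeVar φ (hagree x)
  have hmem : ψ ∈ tpSet (L := L) (M : Set C)
      (fun p : Fin (k + 1) × Fin n => a (w p.1) p.2) := by
    show ψ.Realize _
    exact (hstep i).mpr hφ
  rw [hind (k + 1) w w' hw hw'] at hmem
  exact (hstep i').mp hmem

lemma transfer (hind : IndiscernibleOver L (M : Set C) a) {i i' : I} (hii : i ≤ i')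
    (φ : L.Formula (↥((M : Set C) ∪ ⋃ j < i, Set.range (a j)) ⊕ Fin n))
    (hφ : φ.Realize (Sum.elim (Subtype.val : ↥((M : Set C) ∪ ⋃ j < i, Set.range (a j)) → C)
      (a i))) :
    φ.Realize (Sum.elim (Subtype.val : ↥((M : Set C) ∪ ⋃ j < i, Set.range (a j)) → C)
      (a i')) := by
  refine transfer_aux hind hii _ ?_ φ hφ
  intro b
  rcases b.2 with h | h
  · exact Or.inl h
  · right
    simp only [Set.mem_iUnion, Set.mem_range] at h
    obtain ⟨j, hj, r, hr⟩ := h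
    exact ⟨(j, r), hj, hr⟩

end Transfer

/-- An infinite sequence of `n`-tuples is both indiscernible over `M` and
an `M`-f.s. sequence iff there is an ultrafilter `U` on `M^n` with
`tp(ā_i / M A_{<i}) = Av(U, M A_{<i})` for every `i`. -/
theorem statement11 (M : L.ElementarySubstructure C) {I : Type v} [LinearOrder I]
    [Infinite I] (n : ℕ) (a : I → Fin n → C) :
    (IndiscernibleOver L (M : Set C) a ∧
        ∀ i : I, FinSat (M : Set C)
          (tpSet (L := L) ((M : Set C) ∪ ⋃ j < i, Set.range (a j)) (a i))) ↔
    ∃ U : Ultrafilter (Fin n → ((M : Set C) : Set C)),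
      ∀ i : I, tpSet (L := L) ((M : Set C) ∪ ⋃ j < i, Set.range (a j)) (a i) =
          Av (L := L) U ((M : Set C) ∪ ⋃ j < i, Set.range (a j)) := by
  classical
  constructor
  · rintro ⟨hind, hfs⟩
    obtain ⟨i0⟩ : Nonempty I := inferInstance
    have htop : (⊤ : L.Formula (↥((M : Set C) ∪ ⋃ j < i0, Set.range (a j)) ⊕ Fin n)) ∈
        tpSet (L := L) ((M : Set C) ∪ ⋃ j < i0, Set.range (a j)) (a i0) :=
      Formula.realize_top.mpr trivial
    obtain ⟨m0, hm0, -⟩ := hfs i0 _ htop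
    have hne : Nonempty (Fin n → ((M : Set C) : Set C)) := ⟨fun q => ⟨m0 q, hm0 q⟩⟩
    have hBmono : ∀ {i i' : I}, i ≤ i' →
        ((M : Set C) ∪ ⋃ j < i, Set.range (a j)) ⊆
          ((M : Set C) ∪ ⋃ j < i', Set.range (a j)) := by
      intro i i' hii
      apply Set.union_subset_union_right
      exact Set.iUnion₂_mono' fun j hj => ⟨j, lt_of_lt_of_le hj hii, subset_rfl⟩
    set S : Set (Set (Fin n → ((M : Set C) : Set C))) :=
      {X | ∃ (i : I) (φ : L.Formula (↥((M : Set C) ∪ ⋃ j < i, Set.range (a j)) ⊕ Fin n)),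
        φ ∈ tpSet (L := L) ((M : Set C) ∪ ⋃ j < i, Set.range (a j)) (a i) ∧
        X = {m | φ.Realize (Sum.elim
          (Subtype.val : ↥((M : Set C) ∪ ⋃ j < i, Set.range (a j)) → C)
          (fun q => ((m q : C))))}} with hS
    have hFIP : ∀ t : Set (Set (Fin n → ((M : Set C) : Set C))),
        t ⊆ S → t.Finite → (⋂₀ t).Nonempty := by
      intro t hts htfin
      rcases Set.eq_empty_or_nonempty t with rfl | htne
      · rw [Set.sInter_empty]
        exact ⟨hne.some, Set.mem_univ _⟩
      set T : Finset (Set (Fin n → ((M : Set C) : Set C))) := htfin.toFinset with hT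
      have hTS : ∀ X : {X // X ∈ T}, ∃ (i : I)
          (φ : L.Formula (↥((M : Set C) ∪ ⋃ j < i, Set.range (a j)) ⊕ Fin n)),
          φ ∈ tpSet (L := L) ((M : Set C) ∪ ⋃ j < i, Set.range (a j)) (a i) ∧
          (X : Set (Fin n → ((M : Set C) : Set C))) = {m | φ.Realize (Sum.elim
            (Subtype.val : ↥((M : Set C) ∪ ⋃ j < i, Set.range (a j)) → C)
            (fun q => ((m q : C))))} := by
        intro X
        exact hts (htfin.mem_toFinset.mp X.2)
      choose iF φF hmemF heqF using hTS
      have hTne : T.Nonempty := by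
        rwa [hT, Set.Finite.toFinset_nonempty]
      have hTa : T.attach.Nonempty := Finset.attach_nonempty_iff.mpr hTne
      set istar : I := (T.attach.image iF).max' (hTa.image _) with histar
      have hile : ∀ X, iF X ≤ istar :=
        fun X => Finset.le_max' _ _ (Finset.mem_image_of_mem _ (Finset.mem_attach _ X))
      set Φ : L.Formula (↥((M : Set C) ∪ ⋃ j < istar, Set.range (a j)) ⊕ Fin n) :=
        BoundedFormula.iInf
          (fun X : {X // X ∈ T} => Formula.relabel (Sum.map (Set.inclusion (hBmono (hile X))) id) (φF X))
        with hΦ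
      have hcomp : ∀ (X : {X // X ∈ T}) (m1 : Fin n → C),
          (Sum.elim (Subtype.val : ↥((M : Set C) ∪ ⋃ j < istar, Set.range (a j)) → C) m1)
            ∘ (Sum.map (Set.inclusion (hBmono (hile X))) id)
          = Sum.elim (Subtype.val : ↥((M : Set C) ∪ ⋃ j < iF X, Set.range (a j)) → C) m1 := by
        intro X m1
        funext u
        rcases u with b | q
        · rfl
        · rfl
      have hΦmem : Φ ∈ tpSet (L := L) ((M : Set C) ∪ ⋃ j < istar, Set.range (a j)) (a istar) := by
        show BoundedFormula.Realize Φ _ default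
        rw [hΦ, BoundedFormula.realize_iInf]
        intro X
        show Formula.Realize _ _
        rw [Formula.realize_relabel, hcomp X (a istar)]
        exact transfer hind (hile X) (φF X) (hmemF X)
      obtain ⟨m1, hm1, hreal⟩ := hfs istar Φ hΦmem
      refine ⟨fun q => ⟨m1 q, hm1 q⟩, ?_⟩
      rintro X hXt
      have hXT : X ∈ T := htfin.mem_toFinset.mpr hXt
      have hmm : (fun q => (⟨m1 q, hm1 q⟩ : ((M : Set C) : Set C))) ∈
          ((⟨X, hXT⟩ : {X // X ∈ T}) : Set (Fin n → ((M : Set C) : Set C))) := by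
        rw [heqF ⟨X, hXT⟩]
        show (φF ⟨X, hXT⟩).Realize _
        have h1 := (BoundedFormula.realize_iInf (f := fun X : {X // X ∈ T} =>
          Formula.relabel (Sum.map (Set.inclusion (hBmono (hile X))) id) (φF X))).mp
          (by exact hreal) ⟨X, hXT⟩
        have h2 : Formula.Realize (Formula.relabel
            (Sum.map (Set.inclusion (hBmono (hile ⟨X, hXT⟩))) id) (φF ⟨X, hXT⟩))
            (Sum.elim (Subtype.val : ↥((M : Set C) ∪ ⋃ j < istar, Set.range (a j)) → C) m1) :=
          h1
        rw [Formula.realize_relabel, hcomp ⟨X, hXT⟩ m1] at h2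
        exact h2
      exact hmm
    have hgen : (Filter.generate S).NeBot := Filter.generate_neBot_iff.mpr hFIP
    obtain ⟨U, hUle⟩ := Ultrafilter.exists_le (Filter.generate S)
    have hSU : ∀ X ∈ S, X ∈ U := fun X hX =>
      hUle (Filter.mem_generate_iff.mpr ⟨{X}, by simpa using hX, Set.finite_singleton X, by simp⟩)
    refine ⟨U, fun i => ?_⟩
    ext φ
    constructor
    · intro hφ
      exact hSU _ ⟨i, φ, hφ, rfl⟩
    · intro hAv
      by_contra hnot
      have hnotmem : Formula.not φ ∈
          tpSet (L := L) ((M : Set C) ∪ ⋃ j < i, Set.range (a j)) (a i) :=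
        Formula.realize_not.mpr hnot
      have hXn : {m : Fin n → ((M : Set C) : Set C) | (Formula.not φ).Realize (Sum.elim
          (Subtype.val : ↥((M : Set C) ∪ ⋃ j < i, Set.range (a j)) → C)
          (fun q => ((m q : C))))} ∈ U :=
        hSU _ ⟨i, Formula.not φ, hnotmem, rfl⟩
      have hXp : {m : Fin n → ((M : Set C) : Set C) | φ.Realize (Sum.elim
          (Subtype.val : ↥((M : Set C) ∪ ⋃ j < i, Set.range (a j)) → C)
          (fun q => ((m q : C))))} ∈ U := hAv
      obtain ⟨m, hm1, hm2⟩ := U.nonempty_of_mem (Filter.inter_mem hXp hXn)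
      exact (Formula.realize_not.mp hm2) hm1
  · rintro ⟨U, hU⟩
    constructor
    · intro k i j hi hj
      ext φ
      exact equal_types hU k i j hi hj φ
    · intro i φ hφ
      rw [hU i] at hφ
      obtain ⟨m, hm⟩ := U.nonempty_of_mem hφ
      exact ⟨fun q => (m q : C), fun q => (m q).2, hm⟩

end MonadicNIP
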